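/- Let a ∈ H and g ∈ H', set h = a + K*(g − Ka), and for each γ ∈ Γ let t_γ = S_{w_γ,p_γ}(h_γ) be the unique minimizer of x ↦ x² − 2 h_γ x + w_γ |x|^{p_γ}. Then Σ_γ t_γ² < ∞, so f_min = Σ_γ t_γ e_γ defines an element of H, and for every h' ∈ H one has Φ^sur(f_min + h'; a) ≥ Φ^sur(f_min; a) + ‖h'‖² (as an inequality in [0,∞]); in particular f_min is the unique minimizer of f ↦ Φ^sur(f; a) over H. -/

import Mathlib

open scoped RealInnerProductSpace ENNReal

private lemma abs_rpow_cvx {p : ℝ} (hp : 1 ≤ p) {l : ℝ} (h0 : 0 ≤ l) (h1 : l ≤ 1) (a b : ℝ) :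
    |(1 - l) * a + l * b| ^ p ≤ (1 - l) * |a| ^ p + l * |b| ^ p := by
  have h2 : |(1 - l) * a + l * b| ≤ (1 - l) * |a| + l * |b| := by
    calc |(1 - l) * a + l * b| ≤ |(1 - l) * a| + |l * b| := abs_add_le _ _
      _ = (1 - l) * |a| + l * |b| := by
          rw [abs_mul, abs_mul, abs_of_nonneg (by linarith), abs_of_nonneg h0]
  calc |(1 - l) * a + l * b| ^ p ≤ ((1 - l) * |a| + l * |b|) ^ p :=
        Real.rpow_le_rpow (abs_nonneg _) h2 (by linarith)
    _ ≤ (1 - l) * |a| ^ p + l * |b| ^ p := by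
        have := (convexOn_rpow hp).2 (Set.mem_Ici.mpr (abs_nonneg a))
          (Set.mem_Ici.mpr (abs_nonneg b)) (by linarith : (0:ℝ) ≤ 1 - l) h0 (by ring)
        simpa [smul_eq_mul] using this

private lemma key_scalar {b w p t : ℝ} (hw : 0 ≤ w) (hp1 : 1 ≤ p)
    (hmin : ∀ x : ℝ, t ^ 2 - 2 * b * t + w * |t| ^ p ≤ x ^ 2 - 2 * b * x + w * |x| ^ p)
    (x : ℝ) :
    w * |t| ^ p + 2 * (b - t) * x ≤ w * |t + x| ^ p := by
  have step : ∀ l : ℝ, 0 < l → l ≤ 1 →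
      w * |t| ^ p + 2 * (b - t) * x ≤ w * |t + x| ^ p + l * x ^ 2 := by
    intro l hl0 hl1
    have hmin' := hmin (t + l * x)
    have hcvx := abs_rpow_cvx hp1 hl0.le hl1 t (t + x)
    have heq : (1 - l) * t + l * (t + x) = t + l * x := by ring
    rw [heq] at hcvx
    have hww : w * |t + l * x| ^ p ≤ w * ((1 - l) * |t| ^ p + l * |t + x| ^ p) :=
      mul_le_mul_of_nonneg_left hcvx hw
    -- from hmin' and hww : l * (w*|t|^p + 2*(b-t)*x) ≤ l * (w*|t+x|^p + l*x^2)
    have h3 : l * (w * |t| ^ p + 2 * (b - t) * x) ≤ l * (w * |t + x| ^ p + l * x ^ 2) := by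
      nlinarith [hmin', hww]
    exact le_of_mul_le_mul_left h3 hl0
  by_contra hcon
  push_neg at hcon
  set A := w * |t| ^ p + 2 * (b - t) * x
  set B := w * |t + x| ^ p
  rcases eq_or_ne x 0 with hx | hx
  · have := step 1 one_pos le_rfl
    rw [hx] at this
    simp at this
    exact absurd this (not_le.mpr hcon)
  · have hx2 : 0 < x ^ 2 := by positivity
    have hd : 0 < A - B := by linarith
    set l := min 1 ((A - B) / (2 * x ^ 2)) with hl
    clear_value l
    have hl0 : 0 < l := hl ▸ lt_min one_pos (by positivity)
    have hl1 : l ≤ 1 := hl ▸ min_le_left _ _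
    have := step l hl0 hl1
    have hlx : l * x ^ 2 ≤ (A - B) / 2 := by
      have h5 : l ≤ (A - B) / (2 * x ^ 2) := hl ▸ min_le_right _ _
      calc l * x ^ 2 ≤ ((A - B) / (2 * x ^ 2)) * x ^ 2 :=
            mul_le_mul_of_nonneg_right h5 (sq_nonneg x)
        _ = (A - B) / 2 := by field_simp
    clear_value A B
    linarith [this, hlx, hd]

/-- The surrogate functional `Φ^sur(·; a)` has `f_min = Σ_γ S_{w_γ,p_γ}(h_γ) e_γ` (with
`h = a + K*(g − Ka)`) as its unique minimizer, with the quadratic lower bound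
`Φ^sur(f_min + h'; a) ≥ Φ^sur(f_min; a) + ‖h'‖²`. -/
theorem stmt_7
    {H H' : Type*} [NormedAddCommGroup H] [InnerProductSpace ℝ H] [CompleteSpace H]
    [NormedAddCommGroup H'] [InnerProductSpace ℝ H'] [CompleteSpace H']
    {Γ : Type*} [Countable Γ]
    (e : HilbertBasis Γ ℝ H)
    (K : H →L[ℝ] H') (hK : ‖K‖ < 1)
    (w : Γ → ℝ) (c : ℝ) (hc : 0 < c) (hw : ∀ γ, c ≤ w γ)
    (p : Γ → ℝ) (hp : ∀ γ, 1 ≤ p γ ∧ p γ ≤ 2)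
    (g : H') (a : H)
    (Φ : H → ℝ≥0∞)
    (hΦ : ∀ f, Φ f = ENNReal.ofReal (‖K f - g‖ ^ 2) +
      ∑' γ, ENNReal.ofReal (w γ * |⟪f, e γ⟫| ^ (p γ)))
    (Φsur : H → H → ℝ≥0∞)
    (hΦsur : ∀ f a', Φsur f a' = Φ f + ENNReal.ofReal (‖f - a'‖ ^ 2 - ‖K (f - a')‖ ^ 2))
    (h : H) (hh : h = a + (ContinuousLinearMap.adjoint K) (g - K a))
    (t : Γ → ℝ)
    (ht : ∀ (γ : Γ) (x : ℝ),
      (t γ) ^ 2 - 2 * ⟪h, e γ⟫ * t γ + w γ * |t γ| ^ (p γ) ≤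
        x ^ 2 - 2 * ⟪h, e γ⟫ * x + w γ * |x| ^ (p γ)) :
    Summable (fun γ => (t γ) ^ 2) ∧
    ∃ fmin : H, (∀ γ, ⟪fmin, e γ⟫ = t γ) ∧
      (∀ h' : H, Φsur fmin a + ENNReal.ofReal (‖h'‖ ^ 2) ≤ Φsur (fmin + h') a) ∧
      (∀ f : H, (∀ f' : H, Φsur f a ≤ Φsur f' a) → f = fmin) := by
  -- summability of the basis coefficients of h
  have sb : Summable (fun γ => ⟪h, e γ⟫ ^ 2) := by
    refine (e.summable_inner_mul_inner h h).congr fun γ => ?_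
    rw [real_inner_comm (e γ) h, sq]
  -- minimality at 0
  have h0 : ∀ γ, t γ ^ 2 - 2 * ⟪h, e γ⟫ * t γ + w γ * |t γ| ^ (p γ) ≤ 0 := by
    intro γ
    have hpne : p γ ≠ 0 := by have := (hp γ).1; positivity
    have := ht γ 0
    simpa [Real.zero_rpow hpne] using this
  have htnn : ∀ γ, 0 ≤ w γ * |t γ| ^ (p γ) := fun γ =>
    mul_nonneg (hc.trans_le (hw γ)).le (Real.rpow_nonneg (abs_nonneg _) _)
  have ht2 : ∀ γ, t γ ^ 2 ≤ 4 * ⟪h, e γ⟫ ^ 2 := fun γ => by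
    nlinarith [h0 γ, htnn γ, sq_nonneg (t γ - 2 * ⟪h, e γ⟫)]
  have st2 : Summable (fun γ => t γ ^ 2) :=
    Summable.of_nonneg_of_le (fun γ => sq_nonneg _) ht2 (sb.mul_left 4)
  have su : Summable (fun γ => w γ * |t γ| ^ (p γ)) :=
    Summable.of_nonneg_of_le htnn (fun γ => by nlinarith [h0 γ, sq_nonneg (⟪h, e γ⟫ - t γ)]) sb
  -- construct fmin
  have hmem : Memℓp t 2 := by
    apply memℓp_gen
    refine st2.congr fun γ => ?_
    rw [ENNReal.toReal_ofNat, Real.norm_eq_abs,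
      show ((2:ℝ)) = ((2:ℕ):ℝ) by norm_num, Real.rpow_natCast, sq_abs]
  set fmin : H := e.repr.symm (⟨t, hmem⟩ : lp (fun _ : Γ => ℝ) 2) with hfmin
  have hrep : ∀ γ, ⟪fmin, e γ⟫ = t γ := by
    intro γ
    rw [real_inner_comm, ← e.repr_apply_apply]
    simp [hfmin]
  refine ⟨st2, fmin, hrep, ?_⟩
  -- key per-coordinate inequality
  have key : ∀ γ (x : ℝ), w γ * |t γ| ^ (p γ) + 2 * (⟪h, e γ⟫ - t γ) * x ≤
      w γ * |t γ + x| ^ (p γ) := fun γ x =>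
    key_scalar (hc.trans_le (hw γ)).le (hp γ).1 (ht γ) x
  -- operator norm bound
  have hKle : ∀ u : H, ‖K u‖ ^ 2 ≤ ‖u‖ ^ 2 := by
    intro u
    have h1 : ‖K u‖ ≤ ‖u‖ := by
      have := K.le_opNorm u
      nlinarith [norm_nonneg u, norm_nonneg (K u)]
    nlinarith [norm_nonneg (K u)]
  have hQnn : ∀ f : H, 0 ≤ ‖f - a‖ ^ 2 - ‖K (f - a)‖ ^ 2 := fun f => by
    have := hKle (f - a); linarith
  -- canonical form of Φsur
  have hform : ∀ f : H, Φsur f a =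
      ENNReal.ofReal (‖K f - g‖ ^ 2 + (‖f - a‖ ^ 2 - ‖K (f - a)‖ ^ 2)) +
        ∑' γ, ENNReal.ofReal (w γ * |⟪f, e γ⟫| ^ (p γ)) := by
    intro f
    rw [hΦsur, hΦ, ENNReal.ofReal_add (by positivity) (hQnn f)]
    ring
  -- quadratic expansion identity
  have Qdiff : ∀ f h' : H,
      ‖K (f + h') - g‖ ^ 2 + (‖f + h' - a‖ ^ 2 - ‖K (f + h' - a)‖ ^ 2) =
        (‖K f - g‖ ^ 2 + (‖f - a‖ ^ 2 - ‖K (f - a)‖ ^ 2)) + ‖h'‖ ^ 2 +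
          2 * ⟪f - h, h'⟫ := by
    intro f h'
    have e1 : K (f + h') - g = (K f - g) + K h' := by rw [map_add]; abel
    have e2 : f + h' - a = (f - a) + h' := by abel
    have e3 : K ((f - a) + h') = K (f - a) + K h' := map_add _ _ _
    rw [e1, e2, e3, norm_add_sq_real, norm_add_sq_real, norm_add_sq_real, hh]
    have a1 : ⟪K f - g, K h'⟫ = ⟪(ContinuousLinearMap.adjoint K) (K f - g), h'⟫ :=
      (ContinuousLinearMap.adjoint_inner_left K _ _).symm
    have a2 : ⟪K (f - a), K h'⟫ = ⟪(ContinuousLinearMap.adjoint K) (K (f - a)), h'⟫ :=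
      (ContinuousLinearMap.adjoint_inner_left K _ _).symm
    rw [a1, a2]
    simp only [map_sub, inner_sub_left, inner_add_left,
      ContinuousLinearMap.adjoint_inner_left]
    ring
  have mainineq : ∀ h' : H, Φsur fmin a + ENNReal.ofReal (‖h'‖ ^ 2) ≤ Φsur (fmin + h') a := by
    intro h'
    by_cases hS : (∑' γ, ENNReal.ofReal (w γ * |⟪fmin + h', e γ⟫| ^ (p γ))) = ⊤
    · rw [hform (fmin + h'), hS]
      simp
    · have hco : ∀ γ, ⟪fmin + h', e γ⟫ = t γ + ⟪h', e γ⟫ := fun γ => by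
        rw [inner_add_left, hrep]
      have sv : Summable (fun γ => w γ * |t γ + ⟪h', e γ⟫| ^ (p γ)) := by
        have h1 := ENNReal.summable_toReal hS
        refine h1.congr fun γ => ?_
        rw [ENNReal.toReal_ofReal (by
          exact mul_nonneg (hc.trans_le (hw γ)).le (Real.rpow_nonneg (abs_nonneg _) _)), hco γ]
      have sr : Summable (fun γ => 2 * (⟪h, e γ⟫ - t γ) * ⟪h', e γ⟫) := by
        refine ((e.summable_inner_mul_inner (h - fmin) h').mul_left 2).congr fun γ => ?_
        rw [inner_sub_left, hrep, real_inner_comm (e γ) h']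
        ring
      have hsum_r : ∑' γ, 2 * (⟪h, e γ⟫ - t γ) * ⟪h', e γ⟫ = 2 * ⟪h - fmin, h'⟫ := by
        calc ∑' γ, 2 * (⟪h, e γ⟫ - t γ) * ⟪h', e γ⟫
            = ∑' γ, 2 * (⟪h - fmin, e γ⟫ * ⟪e γ, h'⟫) := by
              refine tsum_congr fun γ => ?_
              rw [inner_sub_left, hrep, real_inner_comm (e γ) h']
              ring
          _ = 2 * ∑' γ, ⟪h - fmin, e γ⟫ * ⟪e γ, h'⟫ := tsum_mul_left
          _ = 2 * ⟪h - fmin, h'⟫ := by rw [e.tsum_inner_mul_inner]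
      have hsum_le : (∑' γ, w γ * |t γ| ^ (p γ)) + 2 * ⟪h - fmin, h'⟫ ≤
          ∑' γ, w γ * |t γ + ⟪h', e γ⟫| ^ (p γ) := by
        calc (∑' γ, w γ * |t γ| ^ (p γ)) + 2 * ⟪h - fmin, h'⟫
            = ∑' γ, (w γ * |t γ| ^ (p γ) + 2 * (⟪h, e γ⟫ - t γ) * ⟪h', e γ⟫) := by
              rw [Summable.tsum_add su sr, hsum_r]
          _ ≤ ∑' γ, w γ * |t γ + ⟪h', e γ⟫| ^ (p γ) :=
              Summable.tsum_le_tsum (fun γ => key γ ⟪h', e γ⟫) (su.add sr) sv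
      rw [hform fmin, hform (fmin + h')]
      have Tm : ∑' γ, ENNReal.ofReal (w γ * |⟪fmin, e γ⟫| ^ (p γ)) =
          ENNReal.ofReal (∑' γ, w γ * |t γ| ^ (p γ)) := by
        simp only [hrep]
        exact (ENNReal.ofReal_tsum_of_nonneg htnn su).symm
      have Tv : ∑' γ, ENNReal.ofReal (w γ * |⟪fmin + h', e γ⟫| ^ (p γ)) =
          ENNReal.ofReal (∑' γ, w γ * |t γ + ⟪h', e γ⟫| ^ (p γ)) := by
        simp only [hco]
        exact (ENNReal.ofReal_tsum_of_nonneg (fun γ =>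
          mul_nonneg (hc.trans_le (hw γ)).le (Real.rpow_nonneg (abs_nonneg _) _)) sv).symm
      have P1 : (0:ℝ) ≤ ‖K fmin - g‖ ^ 2 + (‖fmin - a‖ ^ 2 - ‖K (fmin - a)‖ ^ 2) :=
        add_nonneg (by positivity) (hQnn fmin)
      have P2 : (0:ℝ) ≤ ‖K (fmin + h') - g‖ ^ 2 +
          (‖fmin + h' - a‖ ^ 2 - ‖K (fmin + h' - a)‖ ^ 2) :=
        add_nonneg (by positivity) (hQnn (fmin + h'))
      rw [Tm, Tv, ← ENNReal.ofReal_add P1 (tsum_nonneg htnn),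
        ← ENNReal.ofReal_add (add_nonneg P1 (tsum_nonneg htnn)) (sq_nonneg ‖h'‖),
        ← ENNReal.ofReal_add P2 (tsum_nonneg fun γ =>
              mul_nonneg (hc.trans_le (hw γ)).le (Real.rpow_nonneg (abs_nonneg _) _))]
      apply ENNReal.ofReal_le_ofReal
      have hQ := Qdiff fmin h'
      have hflip : ⟪fmin - h, h'⟫ = -⟪h - fmin, h'⟫ := by
        rw [← neg_sub, inner_neg_left]
      linarith [hsum_le, hQ, hflip.symm.le]
  refine ⟨mainineq, ?_⟩
  -- uniqueness
  intro f hf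
  have hfin : Φsur fmin a ≠ ⊤ := by
    rw [hform fmin]
    have Tm : ∑' γ, ENNReal.ofReal (w γ * |⟪fmin, e γ⟫| ^ (p γ)) =
        ENNReal.ofReal (∑' γ, w γ * |t γ| ^ (p γ)) := by
      simp only [hrep]
      exact (ENNReal.ofReal_tsum_of_nonneg htnn su).symm
    rw [Tm]
    exact ENNReal.add_ne_top.mpr ⟨ENNReal.ofReal_ne_top, ENNReal.ofReal_ne_top⟩
  have h1 := mainineq (f - fmin)
  have h2 : fmin + (f - fmin) = f := by abel
  rw [h2] at h1
  have h3 : Φsur fmin a + ENNReal.ofReal (‖f - fmin‖ ^ 2) ≤ Φsur fmin a + 0 := by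
    rw [add_zero]
    exact h1.trans (hf fmin)
  have h4 : ENNReal.ofReal (‖f - fmin‖ ^ 2) ≤ 0 := ENNReal.le_of_add_le_add_left hfin h3
  have h5 : ‖f - fmin‖ ^ 2 ≤ 0 := by
    have := le_antisymm h4 (by positivity)
    rwa [ENNReal.ofReal_eq_zero] at this
  have h6 : f - fmin = 0 := by
    rw [← norm_eq_zero]
    nlinarith [norm_nonneg (f - fmin)]
  exact sub_eq_zero.mp h6
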